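/- Let K be a field of characteristic 0 and L a normalized simple crossed π-algebra with distinguished basic idempotent i₀ ∈ L_1 and stabilizer G = {α ∈ π : φ_α(i₀) = i₀}. Choose generators s_α of the 1-dimensional spaces i₀L_α for α ∈ G, with s_1 = i₀. Then the structure constants θ_{α,β} ∈ K defined by s_α·s_β = θ_{α,β}·s_{αβ} are all invertible, and {θ_{α,β}}_{α,β∈G} is a normalized 2-cocycle on G with values in K*. -/

import Mathlib

/-- A crossed `G`-algebra over `K`, realized as a `G`-grading by submodules of an
ambient associative unital `K`-algebra `A`, together with a symmetric Frobenius
form `η` and an action `φ` of `G` by algebra automorphisms satisfying the axioms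
(3.1.1)–(3.2.4) of Turaev. -/
structure CrossedAlgebra (K : Type*) [CommRing K] (A : Type*) [Ring A] [Algebra K A]
    (G : Type*) [Group G] [DecidableEq G] where
  comp : G → Submodule K A
  one_mem : (1 : A) ∈ comp 1
  mul_mem : ∀ {α β : G} {a b : A}, a ∈ comp α → b ∈ comp β → a * b ∈ comp (α * β)
  internal : DirectSum.IsInternal comp
  projective : ∀ α : G, Module.Projective K (comp α)
  finite : ∀ α : G, Module.Finite K (comp α)
  η : A →ₗ[K] A →ₗ[K] K
  η_symm : ∀ a b : A, η a b = η b a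
  η_graded : ∀ {α β : G} {a b : A}, a ∈ comp α → b ∈ comp β → α * β ≠ 1 → η a b = 0
  η_nondeg : ∀ α : G,
    Function.Bijective fun a : comp α => (η (a : A)).domRestrict (comp α⁻¹)
  η_assoc : ∀ a b c : A, η (a * b) c = η a (b * c)
  φ : G →* (A ≃ₐ[K] A)
  φ_η : ∀ (β : G) (a b : A), η (φ β a) (φ β b) = η a b
  φ_comp : ∀ (β : G) {α : G} {a : A}, a ∈ comp α → φ β a ∈ comp (β * α * β⁻¹)
  φ_self : ∀ {β : G} {a : A}, a ∈ comp β → φ β a = a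
  φ_cross : ∀ {α β : G} {a b : A}, a ∈ comp α → b ∈ comp β → (φ β a) * b = b * a
  φ_trace : ∀ {α β : G} {c : A}, c ∈ comp (α * β * α⁻¹ * β⁻¹) →
    ∀ (f : comp α →ₗ[K] comp α) (g : comp β →ₗ[K] comp β),
      (∀ x : comp α, (f x : A) = c * φ β (x : A)) →
      (∀ x : comp β, (g x : A) = φ α⁻¹ (c * (x : A))) →
      LinearMap.trace K (comp α) f = LinearMap.trace K (comp β) g


/-- Let `K` be a field of characteristic 0 and `L` a normalized
simple crossed `π`-algebra, with basis of mutually annihilating basic idempotents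
of `L_1` on which `π` acts transitively and `η(i,i) = 1`. Let `i₀ = b j₀` be a
distinguished basic idempotent with stabilizer `G = {α : φ_α(i₀) = i₀}`, and for
`α ∈ G` let `s_α` be a generator of the 1-dimensional space `i₀L_α`, with
`s_1 = i₀`. Then the structure constants `θ_{α,β}` defined by
`s_α·s_β = θ_{α,β}·s_{αβ}` are invertible, and `{θ_{α,β}}_{α,β∈G}` is a normalized
2-cocycle on `G` with values in `K*`. -/
theorem simple_crossedAlgebra_structure_constants_cocycle
    {K : Type*} [Field K] [CharZero K]
    {A : Type*} [Ring A] [Algebra K A] {G : Type*} [Group G] [DecidableEq G]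
    (S : CrossedAlgebra K A G)
    {ι : Type*} (b : Module.Basis ι K (S.comp 1))
    (hidem : ∀ j, ((b j : A)) * ((b j : A)) = (b j : A))
    (hann : ∀ j k, j ≠ k → ((b j : A)) * ((b k : A)) = 0)
    (hnormzd : ∀ j, S.η (b j : A) (b j : A) = 1)
    (htrans : ∀ j k, ∃ α : G, S.φ α (b j : A) = (b k : A))
    (j₀ : ι)
    (s : G → A)
    (hs1 : s 1 = (b j₀ : A))
    (hsgen : ∀ α : G, S.φ α (b j₀ : A) = (b j₀ : A) →
      Submodule.map (LinearMap.mulLeft K ((b j₀ : A))) (S.comp α) =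
        Submodule.span K {s α})
    (θ : G → G → K)
    (hθ : ∀ α β : G, S.φ α (b j₀ : A) = (b j₀ : A) →
      S.φ β (b j₀ : A) = (b j₀ : A) →
      s α * s β = θ α β • s (α * β)) :
    (∀ α β : G, S.φ α (b j₀ : A) = (b j₀ : A) →
      S.φ β (b j₀ : A) = (b j₀ : A) → IsUnit (θ α β)) ∧
    (∀ α β γ : G, S.φ α (b j₀ : A) = (b j₀ : A) →
      S.φ β (b j₀ : A) = (b j₀ : A) → S.φ γ (b j₀ : A) = (b j₀ : A) →
      θ α β * θ (α * β) γ = θ α (β * γ) * θ β γ) ∧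
    θ 1 1 = 1 := by
  classical
  have hi0 : (b j₀ : A) ∈ S.comp 1 := (b j₀).2
  have hi0idem : (b j₀ : A) * (b j₀ : A) = (b j₀ : A) := hidem j₀
  have hi0ne : (b j₀ : A) ≠ 0 := by
    intro h
    have h1 := hnormzd j₀
    rw [h] at h1
    simp at h1
  -- stabilizer closure properties
  have hstab_one : S.φ (1 : G) (b j₀ : A) = (b j₀ : A) := by
    rw [map_one, AlgEquiv.one_apply]
  have hstab_mul : ∀ {α β : G}, S.φ α (b j₀ : A) = (b j₀ : A) →
      S.φ β (b j₀ : A) = (b j₀ : A) → S.φ (α * β) (b j₀ : A) = (b j₀ : A) := by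
    intro α β hα hβ
    rw [map_mul, AlgEquiv.mul_apply, hβ, hα]
  have hstab_inv : ∀ {α : G}, S.φ α (b j₀ : A) = (b j₀ : A) →
      S.φ α⁻¹ (b j₀ : A) = (b j₀ : A) := by
    intro α hα
    have h1 : S.φ α⁻¹ (S.φ α (b j₀ : A)) = (b j₀ : A) := by
      rw [← AlgEquiv.mul_apply, ← map_mul, inv_mul_cancel, map_one, AlgEquiv.one_apply]
    rwa [hα] at h1
  -- basic properties of the s α
  have hs_mem : ∀ α : G, S.φ α (b j₀ : A) = (b j₀ : A) →
      ∃ x ∈ S.comp α, (b j₀ : A) * x = s α := by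
    intro α hα
    have h1 : s α ∈ Submodule.span K {s α} := Submodule.mem_span_singleton_self _
    rw [← hsgen α hα] at h1
    rcases Submodule.mem_map.mp h1 with ⟨x, hx, hxe⟩
    exact ⟨x, hx, by simpa [LinearMap.mulLeft_apply] using hxe⟩
  have hs_comp : ∀ α : G, S.φ α (b j₀ : A) = (b j₀ : A) → s α ∈ S.comp α := by
    intro α hα
    obtain ⟨x, hx, he⟩ := hs_mem α hα
    have h1 := S.mul_mem hi0 hx
    rwa [one_mul, he] at h1
  have hs_left : ∀ α : G, S.φ α (b j₀ : A) = (b j₀ : A) →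
      (b j₀ : A) * s α = s α := by
    intro α hα
    obtain ⟨x, hx, he⟩ := hs_mem α hα
    rw [← he, ← mul_assoc, hi0idem]
  have hs_right : ∀ α : G, S.φ α (b j₀ : A) = (b j₀ : A) →
      s α * (b j₀ : A) = s α := by
    intro α hα
    have h1 := S.φ_cross hi0 (hs_comp α hα)
    rw [hα] at h1
    rw [← h1, hs_left α hα]
  -- orthonormality of the basis with respect to η
  have hetab : ∀ j k, S.η (b j : A) (b k : A) = if j = k then 1 else 0 := by
    intro j k
    by_cases h : j = k
    · subst h; simp [hnormzd j]
    · have h1 : S.η ((b j : A) * (b k : A)) (b k : A)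
          = S.η (b j : A) ((b k : A) * (b k : A)) := S.η_assoc _ _ _
      rw [hann j k h, hidem k] at h1
      simp only [map_zero, LinearMap.zero_apply] at h1
      simp [h, ← h1]
  haveI : Module.Finite K (S.comp 1) := S.finite 1
  haveI : Fintype ι := FiniteDimensional.fintypeBasisIndex b
  have hrepr : ∀ (j : ι) (v : S.comp 1), b.repr v j = S.η (b j : A) (v : A) := by
    intro j v
    have h1 : ((S.η (b j : A)).domRestrict (S.comp 1)) = b.coord j := by
      apply b.ext
      intro k
      simp [LinearMap.domRestrict_apply, hetab j k, Module.Basis.coord_apply,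
        Finsupp.single_apply, eq_comm]
    have h2 := congrArg (fun f => f v) h1
    simpa [Module.Basis.coord_apply] using h2.symm
  -- maps for the trace axiom
  have hgmem : ∀ (β : G), ∀ x ∈ S.comp β,
      (LinearMap.mulLeft K (b j₀ : A)) x ∈ S.comp β := by
    intro β x hx
    have h1 := S.mul_mem hi0 hx
    rwa [one_mul] at h1
  have hfmem : ∀ (β : G), ∀ x ∈ S.comp 1,
      ((LinearMap.mulLeft K (b j₀ : A)).comp (S.φ β).toLinearMap) x ∈ S.comp 1 := by
    intro β x hx
    have h1 : S.φ β x ∈ S.comp (β * 1 * β⁻¹) := S.φ_comp β hx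
    rw [mul_one, mul_inv_cancel] at h1
    have h2 := S.mul_mem hi0 h1
    rwa [one_mul] at h2
  -- nonvanishing of s β via the trace axiom
  have hsne : ∀ β : G, S.φ β (b j₀ : A) = (b j₀ : A) → s β ≠ 0 := by
    intro β hβ hs0
    set g : S.comp β →ₗ[K] S.comp β :=
      (LinearMap.mulLeft K (b j₀ : A)).restrict (hgmem β) with hgdef
    set f : S.comp 1 →ₗ[K] S.comp 1 :=
      ((LinearMap.mulLeft K (b j₀ : A)).comp (S.φ β).toLinearMap).restrict (hfmem β)
      with hfdef
    have hc : (b j₀ : A) ∈ S.comp ((1 : G) * β * 1⁻¹ * β⁻¹) := by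
      rw [show (1 : G) * β * 1⁻¹ * β⁻¹ = 1 by group]
      exact hi0
    have htr := S.φ_trace hc f g
      (fun x => by simp [hfdef, LinearMap.restrict_apply])
      (fun x => by simp [hgdef, LinearMap.restrict_apply, inv_one, map_one])
    have htrf : LinearMap.trace K (S.comp 1) f = 1 := by
      rw [LinearMap.trace_eq_matrix_trace K b f, Matrix.trace]
      have hdiag : ∀ j, Matrix.diag (LinearMap.toMatrix b b f) j
          = if j = j₀ then 1 else 0 := by
        intro j
        have h1 : Matrix.diag (LinearMap.toMatrix b b f) j
            = b.repr (f (b j)) j := by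
          simp [Matrix.diag, LinearMap.toMatrix_apply]
        rw [h1, hrepr]
        have h2 : ((f (b j) : A)) = (b j₀ : A) * S.φ β (b j : A) := by
          simp [hfdef, LinearMap.restrict_apply]
        rw [h2, ← S.η_assoc]
        by_cases h : j = j₀
        · rw [if_pos h, h, hi0idem, hβ, hnormzd j₀]
        · rw [hann j j₀ h]
          simp [h]
      rw [Finset.sum_congr rfl (fun j _ => hdiag j)]
      simp
    have htrg : LinearMap.trace K (S.comp β) g = 1 := by rw [← htr]; exact htrf
    have hgne : g ≠ 0 := by
      intro h
      rw [h, map_zero] at htrg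
      exact one_ne_zero htrg.symm
    obtain ⟨x, hx⟩ : ∃ x : S.comp β, g x ≠ 0 := by
      by_contra h
      push_neg at h
      exact hgne (LinearMap.ext h)
    have hix : (b j₀ : A) * (x : A) ≠ 0 := by
      intro h
      apply hx
      apply Subtype.ext
      simpa [hgdef, LinearMap.restrict_apply] using h
    have hmem : (b j₀ : A) * (x : A) ∈ Submodule.span K {s β} := by
      rw [← hsgen β hβ]
      exact Submodule.mem_map.mpr ⟨x, x.2, rfl⟩
    rw [hs0, Submodule.span_zero_singleton] at hmem
    exact hix (Submodule.mem_bot K |>.mp hmem)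
  -- θ β β⁻¹ is nonzero
  have hθpair : ∀ β : G, S.φ β (b j₀ : A) = (b j₀ : A) → θ β β⁻¹ ≠ 0 := by
    intro β hβ
    have hβ' := hstab_inv hβ
    have hsβ := hs_comp β hβ
    obtain ⟨y, hy⟩ : ∃ y : S.comp β⁻¹, S.η (s β) (y : A) ≠ 0 := by
      by_contra h
      push_neg at h
      have h1 : (⟨s β, hsβ⟩ : S.comp β) = 0 := by
        apply (S.η_nondeg β).injective
        ext y
        simp [LinearMap.domRestrict_apply, h y]
      exact hsne β hβ (by simpa using congrArg Subtype.val h1)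
    have hmem : (b j₀ : A) * (y : A) ∈ Submodule.span K {s β⁻¹} := by
      rw [← hsgen β⁻¹ hβ']
      exact Submodule.mem_map.mpr ⟨y, y.2, rfl⟩
    obtain ⟨c, hc⟩ := Submodule.mem_span_singleton.mp hmem
    have h1 : S.η (s β) ((b j₀ : A) * (y : A)) = S.η (s β) (y : A) := by
      rw [← S.η_assoc, hs_right β hβ]
    have h2 : S.η (s β) (s β⁻¹) ≠ 0 := by
      intro h0
      apply hy
      rw [← h1, ← hc]
      simp [h0]
    have h3 : s β * s β⁻¹ = θ β β⁻¹ • (b j₀ : A) := by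
      have h4 := hθ β β⁻¹ hβ hβ'
      rwa [mul_inv_cancel, hs1] at h4
    have h5 : S.η (b j₀ : A) (s β * s β⁻¹) = θ β β⁻¹ := by
      rw [h3]
      simp [hnormzd j₀]
    have h6 : S.η (b j₀ : A) (s β * s β⁻¹) = S.η (s β) (s β⁻¹) := by
      rw [← S.η_assoc, hs_left β hβ]
    intro h0
    rw [h0] at h5
    exact h2 (by rw [← h6, h5])
  -- general invertibility
  have hθne : ∀ α β : G, S.φ α (b j₀ : A) = (b j₀ : A) →
      S.φ β (b j₀ : A) = (b j₀ : A) → θ α β ≠ 0 := by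
    intro α β hα hβ
    have hαβ := hstab_mul hα hβ
    have hβ' := hstab_inv hβ
    have e1 : s α * s β * s β⁻¹ = (θ α β * θ (α * β) β⁻¹) • s α := by
      rw [hθ α β hα hβ, smul_mul_assoc, hθ (α * β) β⁻¹ hαβ hβ',
        mul_inv_cancel_right, mul_smul]
    have e2 : s α * (s β * s β⁻¹) = θ β β⁻¹ • s α := by
      rw [hθ β β⁻¹ hβ hβ', mul_inv_cancel, hs1, mul_smul_comm, hs_right α hα]
    rw [mul_assoc, e2] at e1
    have h1 : θ β β⁻¹ = θ α β * θ (α * β) β⁻¹ :=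
      smul_left_injective K (hsne α hα) e1
    intro h0
    exact hθpair β hβ (by rw [h1, h0, zero_mul])
  refine ⟨fun α β hα hβ => isUnit_iff_ne_zero.mpr (hθne α β hα hβ), ?_, ?_⟩
  · intro α β γ hα hβ hγ
    have hβγ := hstab_mul hβ hγ
    have hαβ := hstab_mul hα hβ
    have hαβγ := hstab_mul hαβ hγ
    have e1 : s α * s β * s γ = (θ α β * θ (α * β) γ) • s (α * β * γ) := by
      rw [hθ α β hα hβ, smul_mul_assoc, hθ (α * β) γ hαβ hγ, mul_smul]
    have e2 : s α * (s β * s γ) = (θ α (β * γ) * θ β γ) • s (α * β * γ) := by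
      rw [hθ β γ hβ hγ, mul_smul_comm, hθ α (β * γ) hα hβγ, ← mul_assoc,
        smul_smul, mul_comm (θ β γ)]
    rw [mul_assoc, e2] at e1
    exact (smul_left_injective K (hsne (α * β * γ) hαβγ) e1).symm
  · have h1 := hθ 1 1 hstab_one hstab_one
    rw [one_mul, hs1, hi0idem] at h1
    have h2 : (1 : K) • (b j₀ : A) = θ 1 1 • (b j₀ : A) := by
      rw [one_smul]; exact h1
    exact (smul_left_injective K hi0ne h2).symm
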